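/- Let I_A and I_B be two MatP instances on the same bipartite graph such that the preference orders of I_A and I_B agree on every agent except possibly agents that are unmatched in every popular matching of I_A. Then every matching that is popular for I_A is also popular for I_B; in particular, a robust popular matching with respect to I_A and I_B exists. -/

import Mathlib

open Classical

/-- An instance of matching under preferences (MatP): a bipartite graph on
workers `W` and firms `F` together with, for each agent, a strict linear order
on its neighbors (`pref x y z` means `x` strictly prefers `y` to `z`). -/
structure MatP (α : Type*) where
  W : Finset α
  F : Finset α
  disjWF : Disjoint W F
  adj : α → α → Prop
  adj_symm : ∀ x y, adj x y → adj y x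
  adj_loopless : ∀ x, ¬ adj x x
  adj_bipartite : ∀ x y, adj x y → (x ∈ W ∧ y ∈ F) ∨ (x ∈ F ∧ y ∈ W)
  pref : α → α → α → Prop
  pref_adj : ∀ x y z, pref x y z → adj x y ∧ adj x z
  pref_trans : ∀ x y z w, pref x y z → pref x z w → pref x y w
  pref_irrefl : ∀ x y, ¬ pref x y y
  pref_total : ∀ x y z, adj x y → adj x z → y ≠ z → pref x y z ∨ pref x z y

/-- `M` is a matching of instance `I`, encoded as a symmetric partial partner
function: `M x = some y` means the edge `{x,y}` belongs to the matching. -/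
def IsMatching {α : Type*} (I : MatP α) (M : α → Option α) : Prop :=
  (∀ x y, M x = some y → I.adj x y) ∧ (∀ x y, M x = some y → M y = some x)

/-- Agent `x` prefers (partner) option `o` to option `o'`:
being matched beats being unmatched, and among partners `x` uses `I.pref`. -/
def Better {α : Type*} (I : MatP α) (x : α) : Option α → Option α → Prop
  | some _, none => True
  | some y, some z => I.pref x y z
  | none, _ => False

/-- The vote of agent `x` between partner options `o` and `o'`. -/
noncomputable def voteO {α : Type*} (I : MatP α) (x : α) (o o' : Option α) : ℤ :=
  if Better I x o o' then 1 else if Better I x o' o then -1 else 0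

/-- Popularity margin `Δ^I(M,M')`: the sum of all agents' votes. -/
noncomputable def margin {α : Type*} [DecidableEq α]
    (I : MatP α) (M M' : α → Option α) : ℤ :=
  ∑ x ∈ I.W ∪ I.F, voteO I x (M x) (M' x)

/-- `M` is popular for `I`: it does not lose against any matching. -/
def Popular {α : Type*} [DecidableEq α] (I : MatP α) (M : α → Option α) : Prop :=
  ∀ M', IsMatching I M' → 0 ≤ margin I M M'

/-- An agent is unpopular in `I` if it is unmatched in every popular matching of `I`. -/
def Unpopular {α : Type*} [DecidableEq α] (I : MatP α) (z : α) : Prop :=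
  ∀ M, IsMatching I M → Popular I M → M z = none


set_option linter.unusedSectionVars false

section Argmax
variable {α : Type*}

/-- Existence of a maximum of a nonempty finite set under a transitive total relation. -/
theorem exists_maxR (r : α → α → Prop)
    (htrans : ∀ a b c, r a b → r b c → r a c)
    {s : Finset α} (htot : ∀ a ∈ s, ∀ b ∈ s, a ≠ b → r a b ∨ r b a)
    (hs : s.Nonempty) : ∃ m ∈ s, ∀ y ∈ s, y ≠ m → r m y := by
  classical
  induction s using Finset.induction_on with
  | empty => exact absurd hs (by simp)
  | @insert a t ha ih =>
    by_cases ht : t.Nonempty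
    · obtain ⟨m, hm, hmax⟩ := ih (fun x hx y hy => htot x (Finset.mem_insert_of_mem hx) y (Finset.mem_insert_of_mem hy)) ht
      have hane : a ≠ m := fun h => ha (h ▸ hm)
      rcases htot a (Finset.mem_insert_self a t) m (Finset.mem_insert_of_mem hm) hane with h | h
      · refine ⟨a, Finset.mem_insert_self a t, ?_⟩
        intro y hy hya
        rcases Finset.mem_insert.1 hy with rfl | hyt
        · exact absurd rfl hya
        · by_cases hym : y = m
          · exact hym ▸ h
          · exact htrans a m y h (hmax y hyt hym)
      · refine ⟨m, Finset.mem_insert_of_mem hm, ?_⟩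
        intro y hy hym
        rcases Finset.mem_insert.1 hy with rfl | hyt
        · exact h
        · exact hmax y hyt hym
    · obtain rfl : t = ∅ := Finset.not_nonempty_iff_eq_empty.1 ht
      exact ⟨a, by simp, by intro y hy hya; simp at hy; exact absurd hy hya⟩

/-- Choice-based argmax of a finset under a relation. -/
noncomputable def argmaxR (r : α → α → Prop) (s : Finset α) : Option α :=
  if h : ∃ m ∈ s, ∀ y ∈ s, y ≠ m → r m y then some h.choose else none

theorem argmaxR_spec {r : α → α → Prop} {s : Finset α} {m : α}
    (h : argmaxR r s = some m) : m ∈ s ∧ ∀ y ∈ s, y ≠ m → r m y := by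
  unfold argmaxR at h
  split_ifs at h with hh
  · obtain ⟨h1, h2⟩ := hh.choose_spec
    cases h; exact ⟨h1, h2⟩

theorem argmaxR_isSome {r : α → α → Prop} {s : Finset α}
    (h : ∃ m ∈ s, ∀ y ∈ s, y ≠ m → r m y) : ∃ m, argmaxR r s = some m := by
  unfold argmaxR
  rw [dif_pos h]
  exact ⟨_, rfl⟩

/-- If `r` is asymmetric, the argmax is the unique maximum. -/
theorem argmaxR_eq {r : α → α → Prop} (hasym : ∀ a b, r a b → ¬ r b a)
    {s : Finset α} {m : α} (hm : m ∈ s) (hmax : ∀ y ∈ s, y ≠ m → r m y) :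
    argmaxR r s = some m := by
  have h : ∃ m ∈ s, ∀ y ∈ s, y ≠ m → r m y := ⟨m, hm, hmax⟩
  obtain ⟨m', hm'⟩ := argmaxR_isSome h
  obtain ⟨hm's, hm'max⟩ := argmaxR_spec hm'
  by_cases hne : m' = m
  · exact hne ▸ hm'
  · exact absurd (hmax m' hm's hne) (hasym m' m (hm'max m hm (fun h => hne h.symm)))

end Argmax
section GS
variable {α : Type*} [DecidableEq α] (I : MatP α)

theorem pref_asym : ∀ x a b, I.pref x a b → ¬ I.pref x b a :=
  fun x a b h h' => I.pref_irrefl x a (I.pref_trans x a b a h h')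

/-- all adjacency-edges of `I` as worker-firm pairs. -/
noncomputable def pairsE : Finset (α × α) :=
  (I.W ×ˢ I.F).filter (fun p => I.adj p.1 p.2)

/-- Firms still available to worker `w` given rejection set `R`. -/
noncomputable def propSet (R : Finset (α × α)) (w : α) : Finset α :=
  I.F.filter (fun f => I.adj w f ∧ (w, f) ∉ R)

/-- Worker `w`'s current proposal. -/
noncomputable def propW (R : Finset (α × α)) (w : α) : Option α :=
  argmaxR (I.pref w) (propSet I R w)

/-- Current proposers of firm `f`. -/
noncomputable def accSet (R : Finset (α × α)) (f : α) : Finset α :=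
  I.W.filter (fun w => propW I R w = some f)

/-- Firm `f`'s tentatively accepted worker. -/
noncomputable def acc (R : Finset (α × α)) (f : α) : Option α :=
  argmaxR (I.pref f) (accSet I R f)

noncomputable def adds (R : Finset (α × α)) : Finset (α × α) :=
  (pairsE I).filter (fun p => propW I R p.1 = some p.2 ∧ acc I R p.2 ≠ some p.1)

noncomputable def step (R : Finset (α × α)) : Finset (α × α) := R ∪ adds I R

theorem prop_spec {R : Finset (α × α)} {w f : α} (h : propW I R w = some f) :
    f ∈ I.F ∧ I.adj w f ∧ (w, f) ∉ R ∧ ∀ g ∈ propSet I R w, g ≠ f → I.pref w f g := by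
  obtain ⟨hm, hmax⟩ := argmaxR_spec h
  simp only [propSet, Finset.mem_filter] at hm
  exact ⟨hm.1, hm.2.1, hm.2.2, hmax⟩

theorem prop_some {R : Finset (α × α)} {w f : α} (hf : f ∈ I.F) (ha : I.adj w f)
    (hR : (w, f) ∉ R) : ∃ g, propW I R w = some g := by
  apply argmaxR_isSome
  apply exists_maxR _ (I.pref_trans w)
  · intro a hay b hby hab
    simp only [propSet, Finset.mem_filter] at hay hby
    exact I.pref_total w a b hay.2.1 hby.2.1 hab
  · exact ⟨f, by simp [propSet, hf, ha, hR]⟩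

theorem acc_spec {R : Finset (α × α)} {f w : α} (h : acc I R f = some w) :
    w ∈ I.W ∧ propW I R w = some f ∧ ∀ w' ∈ accSet I R f, w' ≠ w → I.pref f w w' := by
  obtain ⟨hm, hmax⟩ := argmaxR_spec h
  simp only [accSet, Finset.mem_filter] at hm
  exact ⟨hm.1, hm.2, hmax⟩

theorem acc_some {R : Finset (α × α)} {w f : α} (hw : w ∈ I.W)
    (h : propW I R w = some f) : ∃ w', acc I R f = some w' := by
  apply argmaxR_isSome
  apply exists_maxR _ (I.pref_trans f)
  · intro a hay b hby hab
    simp only [accSet, Finset.mem_filter] at hay hby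
    exact I.pref_total f a b (I.adj_symm _ _ (prop_spec I hay.2).2.1)
      (I.adj_symm _ _ (prop_spec I hby.2).2.1) hab
  · exact ⟨w, by simp [accSet, hw, h]⟩

theorem prop_step_of_acc {R : Finset (α × α)} {f w : α} (h : acc I R f = some w) :
    propW I (step I R) w = some f := by
  obtain ⟨hw, hp, _⟩ := acc_spec I h
  obtain ⟨hfF, hadj, hR, hmax⟩ := prop_spec I hp
  apply argmaxR_eq (pref_asym I w)
  · simp only [propSet, Finset.mem_filter, step, Finset.mem_union]
    refine ⟨hfF, hadj, ?_⟩
    rintro (hmem | hmem)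
    · exact hR hmem
    · simp only [adds, Finset.mem_filter] at hmem
      exact hmem.2.2 h
  · intro g hg hgf
    apply hmax
    · simp only [propSet, Finset.mem_filter, step, Finset.mem_union] at hg ⊢
      exact ⟨hg.1, hg.2.1, fun hc => hg.2.2 (Or.inl hc)⟩
    · exact hgf

theorem acc_improve {R : Finset (α × α)} {f w : α} (h : acc I R f = some w) :
    ∃ w3, acc I (step I R) f = some w3 ∧ (w3 = w ∨ I.pref f w3 w) := by
  have hw : w ∈ I.W := (acc_spec I h).1
  have hps : propW I (step I R) w = some f := prop_step_of_acc I h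
  obtain ⟨w3, hw3⟩ := acc_some I hw hps
  refine ⟨w3, hw3, ?_⟩
  by_cases hne : w3 = w
  · exact Or.inl hne
  · exact Or.inr ((acc_spec I hw3).2.2 w (by simp [accSet, hw, hps]) (fun hc => hne hc.symm))

def InvR (R : Finset (α × α)) : Prop :=
  ∀ p ∈ R, ∃ w', acc I R p.2 = some w' ∧ I.pref p.2 w' p.1

theorem inv_step {R : Finset (α × α)} (hInv : InvR I R) : InvR I (step I R) := by
  rintro ⟨w, f⟩ hp
  simp only [step, Finset.mem_union] at hp
  rcases hp with hp | hp
  · obtain ⟨w', hacc, hpref⟩ := hInv _ hp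
    obtain ⟨w3, hw3, hor⟩ := acc_improve I hacc
    refine ⟨w3, hw3, ?_⟩
    rcases hor with rfl | h
    · exact hpref
    · exact I.pref_trans f w3 w' w h hpref
  · simp only [adds, Finset.mem_filter] at hp
    obtain ⟨hpE, hprop, hne⟩ := hp
    simp only [pairsE, Finset.mem_filter, Finset.mem_product] at hpE
    obtain ⟨w', hacc⟩ := acc_some I hpE.1.1 hprop
    have hw'w : w' ≠ w := fun hc => hne (hc ▸ hacc)
    have hpref : I.pref f w' w :=
      (acc_spec I hacc).2.2 w (by simp [accSet, hpE.1.1, hprop]) hw'w.symm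
    obtain ⟨w3, hw3, hor⟩ := acc_improve I hacc
    refine ⟨w3, hw3, ?_⟩
    rcases hor with rfl | h
    · exact hpref
    · exact I.pref_trans f w3 w' w h hpref

theorem exists_fixed : ∃ R, InvR I R ∧ step I R = R := by
  classical
  have h0 : ∅ ∈ (pairsE I).powerset.filter (fun R => InvR I R) := by
    simp [InvR]
  obtain ⟨R, hR, hmax⟩ := Finset.exists_max_image
    ((pairsE I).powerset.filter (fun R => InvR I R)) Finset.card ⟨∅, h0⟩
  simp only [Finset.mem_filter, Finset.mem_powerset] at hR
  refine ⟨R, hR.2, ?_⟩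
  by_contra hne
  have hsub : R ⊆ step I R := Finset.subset_union_left
  have hstepE : step I R ⊆ pairsE I :=
    Finset.union_subset hR.1 (Finset.filter_subset _ _)
  have hmem : step I R ∈ (pairsE I).powerset.filter (fun R => InvR I R) := by
    simp only [Finset.mem_filter, Finset.mem_powerset]
    exact ⟨hstepE, inv_step I hR.2⟩
  have hlt : R.card < (step I R).card :=
    Finset.card_lt_card (lt_of_le_of_ne hsub (fun hc => hne hc.symm))
  exact absurd (hmax _ hmem) (not_le.2 hlt)

end GS
section Stable
variable {α : Type*} [DecidableEq α] (I : MatP α)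

/-- No blocking pair. -/
def Stable (M : α → Option α) : Prop :=
  ∀ x y, I.adj x y → Better I x (some y) (M x) → ¬ Better I y (some x) (M y)

theorem exists_stable : ∃ M, IsMatching I M ∧ Stable I M := by
  classical
  obtain ⟨R, hInv, hfix⟩ := exists_fixed I
  set M : α → Option α :=
    fun x => if x ∈ I.W then propW I R x else if x ∈ I.F then acc I R x else none with hM
  have hMW : ∀ w ∈ I.W, M w = propW I R w := fun w hw => by simp [hM, hw]
  have hMF : ∀ f ∈ I.F, M f = acc I R f := fun f hf => by
    have : f ∉ I.W := Finset.disjoint_right.1 I.disjWF hf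
    simp [hM, this, hf]
  -- at the fixed point, proposals are accepted
  have hkey : ∀ w f, propW I R w = some f → w ∈ I.W → acc I R f = some w := by
    intro w f hp hw
    by_contra hne
    have hspec := prop_spec I hp
    have hmem : (w, f) ∈ adds I R := by
      simp only [adds, Finset.mem_filter, pairsE, Finset.mem_product]
      exact ⟨by simp [hw, hspec.1, hspec.2.1], hp, hne⟩
    have : (w, f) ∈ R := by
      rw [← hfix]; exact Finset.mem_union_right _ hmem
    exact hspec.2.2.1 this
  have hWofadjF : ∀ w f, I.adj w f → f ∈ I.F → w ∈ I.W := by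
    intro w f ha hf
    rcases I.adj_bipartite w f ha with h | h
    · exact h.1
    · exact absurd hf (Finset.disjoint_left.1 I.disjWF h.2)
  refine ⟨M, ⟨?_, ?_⟩, ?_⟩
  · -- adjacency
    intro x y hxy
    by_cases hxW : x ∈ I.W
    · rw [hMW x hxW] at hxy; exact (prop_spec I hxy).2.1
    · by_cases hxF : x ∈ I.F
      · rw [hMF x hxF] at hxy
        exact I.adj_symm _ _ (prop_spec I (acc_spec I hxy).2.1).2.1
      · simp [hM, hxW, hxF] at hxy
  · -- symmetry
    intro x y hxy
    by_cases hxW : x ∈ I.W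
    · rw [hMW x hxW] at hxy
      have hspec := prop_spec I hxy
      rw [hMF y hspec.1]
      exact hkey x y hxy hxW
    · by_cases hxF : x ∈ I.F
      · rw [hMF x hxF] at hxy
        have hspec := acc_spec I hxy
        rw [hMW y hspec.1]
        exact hspec.2.1
      · simp [hM, hxW, hxF] at hxy
  · -- stability: first for worker-firm direction
    have core : ∀ w f, w ∈ I.W → f ∈ I.F → I.adj w f →
        Better I w (some f) (M w) → ¬ Better I f (some w) (M f) := by
      intro w f hw hf ha hb
      have hR : (w, f) ∈ R := by
        rw [hMW w hw] at hb
        by_contra hR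
        cases hg : propW I R w with
        | none =>
          obtain ⟨g, hg'⟩ := prop_some I hf ha hR
          rw [hg] at hg'; cases hg'
        | some g =>
          rw [hg] at hb
          have hbb : I.pref w f g := hb
          have hfg : f ≠ g := fun hc => I.pref_irrefl w f (hc ▸ hbb)
          have : I.pref w g f := (prop_spec I hg).2.2.2 f
            (by simp [propSet, hf, ha, hR]) hfg
          exact pref_asym I w f g hbb this
      obtain ⟨w', hacc, hpref⟩ := hInv (w, f) hR
      rw [hMF f hf, hacc]
      intro hb'
      exact pref_asym I f w' w hpref hb'
    intro x y hxy hb hb'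
    rcases I.adj_bipartite x y hxy with ⟨hxW, hyF⟩ | ⟨hxF, hyW⟩
    · exact core x y hxW hyF hxy hb hb'
    · exact core y x hyW hxF (I.adj_symm _ _ hxy) hb' hb

end Stable
section Pop
variable {α : Type*} [DecidableEq α] (I : MatP α)

theorem better_asym {x : α} {o o' : Option α} (h : Better I x o o') :
    ¬ Better I x o' o := by
  match o, o' with
  | some y, none => exact fun h' => h'
  | some y, some z => exact fun h' => pref_asym I x y z h h'
  | none, _ => exact absurd h (by simp [Better])

theorem margin_eq (M M' : α → Option α) :
    margin I M M' =
      ((I.W ∪ I.F).filter (fun x => Better I x (M x) (M' x))).card -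
      ((I.W ∪ I.F).filter (fun x => Better I x (M' x) (M x))).card := by
  classical
  unfold margin
  have hpt : ∀ x, voteO I x (M x) (M' x) =
      (if Better I x (M x) (M' x) then (1 : ℤ) else 0) -
      (if Better I x (M' x) (M x) then (1 : ℤ) else 0) := by
    intro x
    unfold voteO
    by_cases h1 : Better I x (M x) (M' x)
    · simp [h1, better_asym I h1]
    · by_cases h2 : Better I x (M' x) (M x) <;> simp [h1, h2]
  simp only [hpt]
  rw [Finset.sum_sub_distrib, Finset.sum_boole, Finset.sum_boole]

theorem popular_of_stable {M : α → Option α} (hM : IsMatching I M)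
    (hS : Stable I M) : Popular I M := by
  classical
  intro M' hM'
  rw [margin_eq]
  rw [sub_nonneg]
  norm_cast
  apply Finset.card_le_card_of_injOn (fun x => (M' x).getD x)
  · intro x hx
    change x ∈ (I.W ∪ I.F).filter _ at hx
    change (M' x).getD x ∈ (I.W ∪ I.F).filter _
    simp only [Finset.mem_filter] at hx ⊢
    obtain ⟨hxWF, hbx⟩ := hx
    obtain ⟨y, hy⟩ : ∃ y, M' x = some y := by
      cases h : M' x with
      | none => rw [h] at hbx; exact hbx.elim
      | some y => exact ⟨y, rfl⟩
    rw [hy]; simp only [Option.getD_some]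
    have hadjxy : I.adj x y := hM'.1 x y hy
    have hyWF : y ∈ I.W ∪ I.F := by
      rcases I.adj_bipartite x y hadjxy with h | h
      · exact Finset.mem_union_right _ h.2
      · exact Finset.mem_union_left _ h.2
    refine ⟨hyWF, ?_⟩
    -- y prefers M to M'
    have hM'y : M' y = some x := hM'.2 x y hy
    rw [hy] at hbx
    have hnb : ¬ Better I y (some x) (M y) := hS x y hadjxy hbx
    cases hmy : M y with
    | none => rw [hmy] at hnb; exact absurd trivial hnb
    | some u =>
      rw [hmy] at hnb
      have hux : u ≠ x := by
        intro h
        have hMx : M x = some y := hM.2 y x (h ▸ hmy)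
        rw [hMx] at hbx
        exact I.pref_irrefl x y hbx
      have hadjyu : I.adj y u := hM.1 y u hmy
      have hadjyx : I.adj y x := I.adj_symm _ _ hadjxy
      rcases I.pref_total y u x hadjyu hadjyx hux with h | h
      · rw [hM'y]; exact h
      · exact absurd h hnb
  · intro x1 h1 x2 h2 heq
    simp only [Finset.coe_filter, Set.mem_setOf_eq] at h1 h2
    obtain ⟨y1, hy1⟩ : ∃ y, M' x1 = some y := by
      cases h : M' x1 with
      | none => rw [h] at h1; exact h1.2.elim
      | some y => exact ⟨y, rfl⟩
    obtain ⟨y2, hy2⟩ : ∃ y, M' x2 = some y := by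
      cases h : M' x2 with
      | none => rw [h] at h2; exact h2.2.elim
      | some y => exact ⟨y, rfl⟩
    simp only [hy1, hy2, Option.getD_some] at heq
    subst heq
    have e1 : M' y1 = some x1 := hM'.2 x1 y1 hy1
    have e2 : M' y1 = some x2 := hM'.2 x2 y1 hy2
    rw [e1] at e2
    exact Option.some.inj e2

end Pop
section Main
variable {α : Type*}

@[simp] theorem Better_none_left (I : MatP α) (x : α) (o : Option α) :
    Better I x none o = False := rfl

@[simp] theorem Better_some_none (I : MatP α) (x y : α) :
    Better I x (some y) none = True := rfl

@[simp] theorem Better_some_some (I : MatP α) (x y z : α) :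
    Better I x (some y) (some z) = I.pref x y z := rfl

end Main


/-- If the preferences of `IA` and `IB` agree on every agent except possibly
agents that are unmatched in every popular matching of `IA`, then every popular
matching of `IA` is popular for `IB`; in particular a robust popular matching
with respect to `IA` and `IB` exists. -/
theorem robust_of_only_unpopular_perturbed {α : Type*} [DecidableEq α]
    (IA IB : MatP α)
    (hW : IA.W = IB.W) (hF : IA.F = IB.F) (hadj : IA.adj = IB.adj)
    (hpref : ∀ z, ¬ Unpopular IA z → ∀ u v, (IA.pref z u v ↔ IB.pref z u v)) :
    (∀ M, IsMatching IA M → Popular IA M → Popular IB M) ∧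
    (∃ M, IsMatching IA M ∧ Popular IA M ∧ Popular IB M) := by
  have transfer : ∀ M, IsMatching IA M → Popular IA M → Popular IB M := by
    intro M hM hP M' hM'
    have hM'A : IsMatching IA M' := by
      unfold IsMatching at hM' ⊢
      rw [hadj]; exact hM'
    have hvote : ∀ x, voteO IB x (M x) (M' x) = voteO IA x (M x) (M' x) := by
      intro x
      by_cases hU : Unpopular IA x
      · have hMx : M x = none := hU M hM hP
        rw [hMx]
        cases h' : M' x with
        | none => simp [voteO]
        | some y => simp [voteO]
      · have hiff : ∀ o o', Better IA x o o' ↔ Better IB x o o' := by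
          intro o o'
          match o, o' with
          | some y, none => simp
          | some y, some z => simpa using hpref x hU y z
          | none, o' => simp
        unfold voteO
        rw [hiff (M x) (M' x), hiff (M' x) (M x)]
    have hmarg : margin IB M M' = margin IA M M' := by
      unfold margin
      rw [← hW, ← hF]
      exact Finset.sum_congr rfl (fun x _ => hvote x)
    rw [hmarg]
    exact hP M' hM'A
  obtain ⟨M, hM, hS⟩ := exists_stable IA
  have hP : Popular IA M := popular_of_stable IA hM hS
  exact ⟨transfer, M, hM, hP, transfer M hM hP⟩
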